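/- Let m ≥ 2 and k be natural numbers, fix a coordinate j, fix n_{-j} ∈ ℕ^{m-1}, and suppose that for every choice of the other coordinates n'_{-j} ∈ ℕ^{m-1}, the set of values n'_j ∈ ℕ such that (n'_j, n'_{-j}) is 'bad' has cardinality at most M. Call a point (n_j, n_{-j}) 'k-covered' if there exists a bad point (n'_j, n'_{-j}) with n'_h ≤ n_h for all coordinates h and Σ_h (n_h - n'_h) ≤ k. Then for the fixed n_{-j}, the number of values n_j such that (n_j, n_{-j}) is k-covered is at most M · C(m+k, m). -/

import Mathlib

open Finset

/-- The finset of tuples in `Fin m → ℕ` with sum at most `k`. -/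
def Wle (m k : ℕ) : Finset (Fin m → ℕ) :=
  (Finset.range (k+1)).biUnion (Finset.Nat.antidiagonalTuple m)

lemma mem_Wle {m k : ℕ} {w : Fin m → ℕ} : w ∈ Wle m k ↔ ∑ i, w i ≤ k := by
  simp only [Wle, Finset.mem_biUnion, Finset.mem_range,
    Finset.Nat.mem_antidiagonalTuple]
  constructor
  · rintro ⟨s, hs, rfl⟩; omega
  · intro h; exact ⟨∑ i, w i, by omega, rfl⟩

lemma card_Wle : ∀ m k : ℕ, (Wle m k).card = (m + k).choose m := by
  intro m
  induction m with
  | zero =>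
    intro k
    rw [Nat.choose_zero_right]
    rw [Finset.card_eq_one]
    refine ⟨fun i => i.elim0, ?_⟩
    ext w
    simp only [mem_Wle, Finset.mem_singleton]
    constructor
    · intro _; funext i; exact i.elim0
    · rintro rfl; simp
  | succ m ih =>
    intro k
    have hW : Wle (m+1) k =
        (Finset.range (k+1)).biUnion
          (fun a => (Wle m (k - a)).image (fun x => (Fin.cons a x : Fin (m+1) → ℕ))) := by
      ext w
      simp only [mem_Wle, Finset.mem_biUnion, Finset.mem_range, Finset.mem_image]
      constructor
      · intro h
        refine ⟨w 0, ?_, Fin.tail w, ?_, Fin.cons_self_tail w⟩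
        · have := Fin.sum_univ_succ w
          omega
        · have := Fin.sum_univ_succ w
          have ht : ∑ i, Fin.tail w i = ∑ i : Fin m, w i.succ := rfl
          omega
      · rintro ⟨a, ha, x, hx, rfl⟩
        rw [Fin.sum_univ_succ]
        simp only [Fin.cons_zero, Fin.cons_succ]
        have : ∑ i : Fin m, x i ≤ k - a := hx
        omega
    have hinj : ∀ a : ℕ,
        Function.Injective (fun x : Fin m → ℕ => (Fin.cons a x : Fin (m+1) → ℕ)) := by
      intro a x y hxy
      funext i
      have := congrArg (fun f => f i.succ) hxy
      simpa using this
    rw [hW, Finset.card_biUnion]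
    · have hc : ∀ a ∈ Finset.range (k+1),
          ((Wle m (k - a)).image (fun x => (Fin.cons a x : Fin (m+1) → ℕ))).card = (m + (k - a)).choose m := by
        intro a _
        rw [Finset.card_image_of_injective _ (hinj a), ih]
      rw [Finset.sum_congr rfl hc]
      have h1 : ∑ a ∈ Finset.range (k+1), (m + (k - a)).choose m
          = ∑ i ∈ Finset.range (k+1), (m + i).choose m := by
        rw [← Finset.sum_range_reflect]
        refine Finset.sum_congr rfl fun i hi => ?_
        rw [Finset.mem_range] at hi
        congr 1
        omega
      have h2 : ∑ i ∈ Finset.range (k+1), (m + i).choose m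
          = ∑ x ∈ Finset.Icc m (m + k), x.choose m := by
        have himg : Finset.Icc m (m + k) = (Finset.range (k+1)).image (fun i => m + i) := by
          ext x
          simp only [Finset.mem_Icc, Finset.mem_image, Finset.mem_range]
          constructor
          · rintro ⟨ha, hb⟩; exact ⟨x - m, by omega, by omega⟩
          · rintro ⟨i, hi, rfl⟩; omega
        rw [himg, Finset.sum_image (by intro a _ b _ h; simp only at h; omega)]
      rw [h1, h2, Nat.sum_Icc_choose]
      congr 1
      omega
    · intro a _ b _ hab
      simp only [Finset.disjoint_left, Finset.mem_image]
      rintro w ⟨x, _, rfl⟩ ⟨y, _, hy⟩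
      apply hab
      have := congrArg (fun f => f 0) hy
      simpa using this.symm

lemma ncard_biUnion_le {α β : Type*} [DecidableEq α] (s : Finset α) (F : α → Set β)
    (hfin : ∀ a ∈ s, (F a).Finite) :
    (⋃ a ∈ s, F a).ncard ≤ ∑ a ∈ s, (F a).ncard := by
  induction s using Finset.induction with
  | empty => simp
  | @insert a s ha ih =>
    rw [Finset.sum_insert ha]
    have : (⋃ x ∈ insert a s, F x) = F a ∪ ⋃ x ∈ s, F x := by
      simp [Set.biUnion_insert]
    rw [this]
    calc (F a ∪ ⋃ x ∈ s, F x).ncard ≤ (F a).ncard + (⋃ x ∈ s, F x).ncard :=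
          Set.ncard_union_le _ _
      _ ≤ (F a).ncard + ∑ x ∈ s, (F x).ncard := by
          gcongr
          exact ih fun x hx => hfin x (Finset.mem_insert_of_mem hx)

theorem stmt_11 (m k M : ℕ) (hm : 2 ≤ m) (j : Fin m)
    (Bad : (Fin m → ℕ) → Prop) (nrest : Fin m → ℕ)
    (hfiber : ∀ v : Fin m → ℕ,
      {t : ℕ | Bad (Function.update v j t)}.Finite ∧
        {t : ℕ | Bad (Function.update v j t)}.ncard ≤ M) :
    {t : ℕ | ∃ n' : Fin m → ℕ, Bad n' ∧
        (∀ h, n' h ≤ Function.update nrest j t h) ∧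
        ∑ h, (Function.update nrest j t h - n' h) ≤ k}.Finite ∧
      {t : ℕ | ∃ n' : Fin m → ℕ, Bad n' ∧
        (∀ h, n' h ≤ Function.update nrest j t h) ∧
        ∑ h, (Function.update nrest j t h - n' h) ≤ k}.ncard ≤
          M * Nat.choose (m + k) m := by
  set S := {t : ℕ | ∃ n' : Fin m → ℕ, Bad n' ∧
      (∀ h, n' h ≤ Function.update nrest j t h) ∧
      ∑ h, (Function.update nrest j t h - n' h) ≤ k} with hS
  set F : (Fin m → ℕ) → Set ℕ :=
    fun w => (fun b => b + w j) '' {b | Bad (Function.update (fun h => nrest h - w h) j b)}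
    with hF
  have hFfin : ∀ w, (F w).Finite := fun w =>
    ((hfiber (fun h => nrest h - w h)).1).image _
  have hFcard : ∀ w, (F w).ncard ≤ M := fun w =>
    le_trans (Set.ncard_image_le (hfiber (fun h => nrest h - w h)).1)
      (hfiber (fun h => nrest h - w h)).2
  have hsub : S ⊆ ⋃ w ∈ Wle m k, F w := by
    intro t ht
    obtain ⟨n', hbad, hle, hsum⟩ := ht
    set w : Fin m → ℕ := fun h => Function.update nrest j t h - n' h with hw
    have hwW : w ∈ Wle m k := mem_Wle.mpr hsum
    refine Set.mem_biUnion hwW ?_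
    refine ⟨n' j, ?_, ?_⟩
    · show Bad (Function.update (fun h => nrest h - w h) j (n' j))
      have : Function.update (fun h => nrest h - w h) j (n' j) = n' := by
        funext h
        by_cases hh : h = j
        · subst hh; simp
        · rw [Function.update_of_ne hh]
          have h1 : Function.update nrest j t h = nrest h := Function.update_of_ne hh _ _
          have h2 : n' h ≤ nrest h := h1 ▸ hle h
          simp only [hw, h1]
          omega
      rw [this]; exact hbad
    · show n' j + w j = t
      have h1 : Function.update nrest j t j = t := Function.update_self _ _ _
      have h2 : n' j ≤ t := h1 ▸ hle j
      simp only [hw, h1]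
      omega
  have hfin : S.Finite :=
    Set.Finite.subset (Set.Finite.biUnion (Wle m k).finite_toSet (fun w _ => hFfin w)) hsub
  refine ⟨hfin, ?_⟩
  calc S.ncard ≤ (⋃ w ∈ Wle m k, F w).ncard :=
        Set.ncard_le_ncard hsub
          (Set.Finite.biUnion (Wle m k).finite_toSet (fun w _ => hFfin w))
    _ ≤ ∑ w ∈ Wle m k, (F w).ncard := ncard_biUnion_le _ _ (fun w _ => hFfin w)
    _ ≤ ∑ _w ∈ Wle m k, M := Finset.sum_le_sum fun w _ => hFcard w
    _ = (Wle m k).card * M := by rw [Finset.sum_const, smul_eq_mul]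
    _ = M * Nat.choose (m + k) m := by rw [card_Wle, Nat.mul_comm]
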